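/- Let D and N be positive integers with D dividing N, let T be the N-regular rooted tree, and let γ be a regular D-coloring of T, i.e., a map from T to a set of D colors such that for every vertex τ of T and every color i, exactly N/D of the N successors of τ have color i. Let S be a subtree of T. Suppose that for every subtree R ⊆ T of type (II) (meaning: for every τ ∈ R there is a color i(τ) such that the successors of τ lying in R are exactly all successors of τ of color i(τ)), the intersection S ∩ R is infinite. Then S contains a subtree of type (I), i.e., a subset S′ ⊆ S which is itself a subtree of T such that every vertex of S′ has, for each of the D colors, exactly one successor of that color lying in S′. -/

import Mathlib

/-- A subtree of the `N`-regular rooted tree (modelled as the set of all finite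
words over `Fin N`): a set of words containing the empty word and closed under
taking prefixes. -/
def IsSubtree {N : ℕ} (S : Set (List (Fin N))) : Prop :=
  [] ∈ S ∧ ∀ w ∈ S, ∀ v : List (Fin N), v <+: w → v ∈ S

namespace Stmt11Aux

/-- A local subtree rooted at `w`. -/
def Loc {N : ℕ} (w : List (Fin N)) (R : Set (List (Fin N))) : Prop :=
  w ∈ R ∧ ∀ u ∈ R, w <+: u ∧ ∀ v, w <+: v → v <+: u → v ∈ R

/-- Type (II) condition. -/
def T2 {N D : ℕ} (γ : List (Fin N) → Fin D) (R : Set (List (Fin N))) : Prop :=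
  ∀ u ∈ R, ∃ c : Fin D, ∀ a : Fin N, u ++ [a] ∈ R ↔ γ (u ++ [a]) = c

/-- The monochromatic (color `c0` at every step) local type-II tree above `w`. -/
def ctree {N D : ℕ} (γ : List (Fin N) → Fin D) (w : List (Fin N)) (c0 : Fin D) :
    Set (List (Fin N)) :=
  {u | w <+: u ∧ ∀ v : List (Fin N), ∀ a : Fin N, w <+: v → v ++ [a] <+: u →
    γ (v ++ [a]) = c0}

lemma snoc_eq {N : ℕ} {a b : Fin N} {w u : List (Fin N)}
    (h1 : w ++ [a] <+: u) (h2 : w ++ [b] <+: u) : a = b := by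
  rcases List.prefix_or_prefix_of_prefix h1 h2 with hh | hh
  · have := hh.eq_of_length (by simp)
    simpa using this
  · have := hh.eq_of_length (by simp)
    simpa using this.symm

lemma ctree_loc {N D : ℕ} (γ : List (Fin N) → Fin D) (w : List (Fin N)) (c0 : Fin D) :
    Loc w (ctree γ w c0) := by
  constructor
  · refine ⟨List.prefix_refl _, ?_⟩
    intro v a hv hva
    have h1 := hva.length_le
    have h2 := hv.length_le
    simp only [List.length_append, List.length_singleton] at h1
    omega
  · intro u hu
    refine ⟨hu.1, ?_⟩
    intro v hv hvu
    exact ⟨hv, fun v' a hv' hv'a => hu.2 v' a hv' (hv'a.trans hvu)⟩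

lemma ctree_t2 {N D : ℕ} (γ : List (Fin N) → Fin D) (w : List (Fin N)) (c0 : Fin D) :
    T2 γ (ctree γ w c0) := by
  intro u hu
  refine ⟨c0, fun a' => ⟨?_, ?_⟩⟩
  · intro hmem
    exact hmem.2 u a' hu.1 (List.prefix_refl _)
  · intro hγ
    refine ⟨hu.1.trans (List.prefix_append u [a']), ?_⟩
    intro v a hv hva
    rcases List.prefix_concat_iff.mp hva with heq | hpre
    · rw [heq]; exact hγ
    · exact hu.2 v a hv hpre

/-- Key extension step. -/
lemma step {N D : ℕ} (γ : List (Fin N) → Fin D) (hD : 0 < D)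
    (S : Set (List (Fin N))) (hS : IsSubtree S) (w : List (Fin N))
    (hQ : ∀ R, Loc w R → T2 γ R → (S ∩ R).Infinite) (c : Fin D) :
    ∃ a : Fin N, γ (w ++ [a]) = c ∧ w ++ [a] ∈ S ∧
      ∀ R, Loc (w ++ [a]) R → T2 γ R → (S ∩ R).Infinite := by
  by_contra hcon
  push_neg at hcon
  have hAll : ∀ a : Fin N, γ (w ++ [a]) = c →
      ∃ R, Loc (w ++ [a]) R ∧ T2 γ R ∧ (S ∩ R).Finite := by
    intro a ha
    by_cases hmem : w ++ [a] ∈ S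
    · obtain ⟨R, hR1, hR2, hR3⟩ := hcon a ha hmem
      exact ⟨R, hR1, hR2, hR3⟩
    · refine ⟨ctree γ (w ++ [a]) ⟨0, hD⟩, ctree_loc γ _ _, ctree_t2 γ _ _, ?_⟩
      have hempty : S ∩ ctree γ (w ++ [a]) ⟨0, hD⟩ = ∅ := by
        ext u
        simp only [Set.mem_inter_iff, Set.mem_empty_iff_false, iff_false, not_and]
        intro huS hu
        exact hmem (hS.2 u huS (w ++ [a]) hu.1)
      rw [hempty]; exact Set.finite_empty
  have hch : ∀ a : Fin N, ∃ R, γ (w ++ [a]) = c →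
      (Loc (w ++ [a]) R ∧ T2 γ R ∧ (S ∩ R).Finite) := by
    intro a
    by_cases ha : γ (w ++ [a]) = c
    · obtain ⟨R, hR⟩ := hAll a ha
      exact ⟨R, fun _ => hR⟩
    · exact ⟨∅, fun h' => absurd h' ha⟩
  choose F hF using hch
  set R : Set (List (Fin N)) :=
    insert w (⋃ a ∈ {a : Fin N | γ (w ++ [a]) = c}, F a) with hRdef
  have hmemR : ∀ u, u ∈ R ↔ u = w ∨ ∃ a, γ (w ++ [a]) = c ∧ u ∈ F a := by
    intro u
    simp [hRdef, Set.mem_insert_iff, Set.mem_iUnion]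
  have hloc : Loc w R := by
    constructor
    · exact Set.mem_insert _ _
    · intro u hu
      rcases (hmemR u).mp hu with rfl | ⟨a, ha, hua⟩
      · refine ⟨List.prefix_refl _, fun v hv hvu => ?_⟩
        have : v = u := hvu.eq_of_length (le_antisymm hvu.length_le hv.length_le)
        rw [this]; exact hu
      · have hFa := hF a ha
        have hwa_u : w ++ [a] <+: u := (hFa.1.2 u hua).1
        refine ⟨(List.prefix_append w [a]).trans hwa_u, ?_⟩
        intro v hv hvu
        by_cases hvw : v = w
        · rw [hvw]; exact Set.mem_insert _ _
        · have hav : w ++ [a] <+: v := by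
            rcases List.prefix_or_prefix_of_prefix hvu hwa_u with hh | hh
            · have hlw : w.length ≠ v.length := fun e => hvw (hv.eq_of_length e).symm
              have h1 := hv.length_le
              have h2 := hh.length_le
              have : v.length = (w ++ [a]).length := by
                simp only [List.length_append, List.length_singleton] at h2 ⊢
                omega
              rw [hh.eq_of_length this]
            · exact hh
          have hvFa : v ∈ F a := (hFa.1.2 u hua).2 v hav hvu
          exact (hmemR v).mpr (Or.inr ⟨a, ha, hvFa⟩)
  have ht2 : T2 γ R := by
    intro u hu
    rcases (hmemR u).mp hu with rfl | ⟨a, ha, hua⟩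
    · refine ⟨c, fun a' => ⟨?_, ?_⟩⟩
      · intro hmem'
        rcases (hmemR _).mp hmem' with heq | ⟨b, hb, hmb⟩
        · exact absurd (congrArg List.length heq) (by simp)
        · have hbpre : u ++ [b] <+: u ++ [a'] := ((hF b hb).1.2 _ hmb).1
          rw [← snoc_eq hbpre (List.prefix_refl _)]
          exact hb
      · intro hγ
        exact (hmemR _).mpr (Or.inr ⟨a', hγ, (hF a' hγ).1.1⟩)
    · have hFa := hF a ha
      obtain ⟨c', hc'⟩ := hFa.2.1 u hua
      refine ⟨c', fun a' => ?_⟩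
      rw [← hc' a']
      constructor
      · intro hmem'
        rcases (hmemR _).mp hmem' with heq | ⟨b, hb, hmb⟩
        · exfalso
          have h1 := ((hFa.1.2 u hua).1).length_le
          have := congrArg List.length heq
          simp only [List.length_append, List.length_singleton] at this h1
          omega
        · have hbpre : w ++ [b] <+: u ++ [a'] := ((hF b hb).1.2 _ hmb).1
          have hapre : w ++ [a] <+: u ++ [a'] :=
            ((hFa.1.2 u hua).1).trans (List.prefix_append u [a'])
          rw [← snoc_eq hbpre hapre]
          exact hmb
      · intro hmem'
        exact (hmemR _).mpr (Or.inr ⟨a, ha, hmem'⟩)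
  have hfin : (S ∩ R).Finite := by
    have hsub : S ∩ R ⊆ insert w (⋃ a ∈ {a : Fin N | γ (w ++ [a]) = c}, S ∩ F a) := by
      rintro u ⟨huS, huR⟩
      rcases (hmemR u).mp huR with rfl | ⟨a, ha, hua⟩
      · exact Set.mem_insert _ _
      · exact Set.mem_insert_iff.mpr (Or.inr (Set.mem_biUnion ha ⟨huS, hua⟩))
    refine Set.Finite.subset ?_ hsub
    exact Set.Finite.insert _ (Set.Finite.biUnion (Set.toFinite _)
      (fun a ha => (hF a ha).2.2))
  exact hQ R hloc ht2 hfin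

/-- Build a word from a list of colors using a successor-choice function. -/
def bld {N D : ℕ} (f : List (Fin N) → Fin D → Fin N) : List (Fin D) → List (Fin N)
  | [] => []
  | c :: cs => bld f cs ++ [f (bld f cs) c]

lemma bld_length {N D : ℕ} (f : List (Fin N) → Fin D → Fin N) (cs : List (Fin D)) :
    (bld f cs).length = cs.length := by
  induction cs with
  | nil => rfl
  | cons c cs ih => simp [bld, ih]

lemma bld_prefix {N D : ℕ} (f : List (Fin N) → Fin D → Fin N) (cs : List (Fin D))
    (v : List (Fin N)) (h : v <+: bld f cs) : ∃ ds, v = bld f ds := by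
  induction cs with
  | nil =>
    exact ⟨[], List.prefix_nil.mp h⟩
  | cons c cs ih =>
    rw [bld] at h
    rcases List.prefix_concat_iff.mp h with heq | hpre
    · exact ⟨c :: cs, heq⟩
    · exact ih hpre

end Stmt11Aux

open Stmt11Aux

theorem stmt11 (D N : ℕ) (hD : 0 < D) (hN : 0 < N) (hDN : D ∣ N)
    (γ : List (Fin N) → Fin D)
    -- `γ` is a regular `D`-coloring: each vertex has exactly `N / D`
    -- successors of each color.
    (hreg : ∀ w : List (Fin N), ∀ c : Fin D,
      {a : Fin N | γ (w ++ [a]) = c}.ncard = N / D)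
    (S : Set (List (Fin N))) (hS : IsSubtree S)
    -- For every subtree `R` of type (II), `S ∩ R` is infinite.
    (h : ∀ R : Set (List (Fin N)), IsSubtree R →
      (∀ w ∈ R, ∃ c : Fin D, ∀ a : Fin N, (w ++ [a] ∈ R ↔ γ (w ++ [a]) = c)) →
      (S ∩ R).Infinite) :
    -- `S` contains a subtree of type (I).
    ∃ S' ⊆ S, IsSubtree S' ∧ ∀ w ∈ S', ∀ c : Fin D,
      {a : Fin N | w ++ [a] ∈ S' ∧ γ (w ++ [a]) = c}.ncard = 1 := by
  -- The invariant `P w`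
  have hQ₀ : ∀ R, Loc [] R → T2 γ R → (S ∩ R).Infinite := by
    intro R hl ht
    exact h R ⟨hl.1, fun u hu v hv => (hl.2 u hu).2 v List.nil_prefix hv⟩ ht
  have hstep : ∀ w : List (Fin N), ∀ c : Fin D, ∃ a : Fin N,
      ((w ∈ S ∧ ∀ R, Loc w R → T2 γ R → (S ∩ R).Infinite) →
        (γ (w ++ [a]) = c ∧ w ++ [a] ∈ S ∧
          ∀ R, Loc (w ++ [a]) R → T2 γ R → (S ∩ R).Infinite)) := by
    intro w c
    by_cases hP : w ∈ S ∧ ∀ R, Loc w R → T2 γ R → (S ∩ R).Infinite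
    · obtain ⟨a, h1, h2, h3⟩ := step γ hD S hS w hP.2 c
      exact ⟨a, fun _ => ⟨h1, h2, h3⟩⟩
    · exact ⟨⟨0, hN⟩, fun hh => absurd hh hP⟩
  choose f hf using hstep
  have hP : ∀ cs : List (Fin D),
      (bld f cs ∈ S ∧ ∀ R, Loc (bld f cs) R → T2 γ R → (S ∩ R).Infinite) := by
    intro cs
    induction cs with
    | nil => exact ⟨hS.1, hQ₀⟩
    | cons c cs ih =>
      have := hf (bld f cs) c ih
      exact ⟨this.2.1, this.2.2⟩
  refine ⟨Set.range (bld f), ?_, ⟨⟨[], rfl⟩, ?_⟩, ?_⟩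
  · rintro u ⟨cs, rfl⟩
    exact (hP cs).1
  · rintro w ⟨cs, rfl⟩ v hv
    obtain ⟨ds, rfl⟩ := bld_prefix f cs v hv
    exact ⟨ds, rfl⟩
  · rintro w ⟨cs, rfl⟩ c
    have heq : {a : Fin N | bld f cs ++ [a] ∈ Set.range (bld f) ∧
        γ (bld f cs ++ [a]) = c} = {f (bld f cs) c} := by
      ext a
      simp only [Set.mem_setOf_eq, Set.mem_singleton_iff, Set.mem_range]
      constructor
      · rintro ⟨⟨ds, hds⟩, hγ⟩
        cases ds with
        | nil =>
          exfalso
          have := congrArg List.length hds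
          simp [bld] at this
        | cons d ds' =>
          rw [bld] at hds
          have hlen : (bld f ds').length = (bld f cs).length := by
            have := congrArg List.length hds
            simp only [List.length_append, List.length_singleton] at this
            omega
          obtain ⟨h1, h2⟩ := List.append_inj hds hlen
          rw [h1] at h2
          have hfa : f (bld f cs) d = a := by simpa using h2
          have hγd := (hf (bld f cs) d (hP cs)).1
          rw [hfa] at hγd
          rw [hγd] at hγ
          rw [← hfa, hγ]
      · rintro rfl
        exact ⟨⟨c :: cs, rfl⟩, (hf (bld f cs) c (hP cs)).1⟩
    rw [heq]
    exact Set.ncard_singleton _
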